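/- There exists a commutative ring 𝕃 together with a formal group law F_𝕃 over 𝕃 which is universal: for every commutative ring R and every formal group law F over R, there is a unique ring homomorphism φ : 𝕃 → R such that applying φ to the coefficients of F_𝕃 yields F. -/

import Mathlib

open MvPowerSeries

/-- Substitution of the family `f` (each entry should have zero constant term)
into the multivariate power series `G`. The coefficient of a monomial `e` only
depends on the monomials of `G` of total degree at most the degree of `e`, so it
is computed from a suitable polynomial truncation of `G`. -/
noncomputable def psubst {σ τ : Type*} [Fintype σ] [DecidableEq σ] {R : Type*} [CommRing R]
    (f : σ → MvPowerSeries τ R) (G : MvPowerSeries σ R) : MvPowerSeries τ R :=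
  fun e =>
    MvPowerSeries.coeff (R := R) e
      (MvPolynomial.eval₂ (MvPowerSeries.C (σ := τ) (R := R)) f
        ((Finset.Iic (Finsupp.equivFunOnFinite.symm fun _ : σ => e.sum fun _ n => n)).sum
          fun m => MvPolynomial.monomial m (MvPowerSeries.coeff (R := R) m G)))

/-- A one-dimensional commutative formal group law over a commutative ring `R`:
a power series `F(u,v)` with `F(u,0) = F(0,u) = u`, `F(u,v) = F(v,u)` and
`F(F(u,v),w) = F(u,F(v,w))`. -/
structure FormalGroupLaw (R : Type*) [CommRing R] where
  F : MvPowerSeries (Fin 2) R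
  zero_right : psubst ![(PowerSeries.X : PowerSeries R), 0] F = PowerSeries.X
  zero_left : psubst ![(0 : PowerSeries R), PowerSeries.X] F = PowerSeries.X
  comm : psubst ![(MvPowerSeries.X 1 : MvPowerSeries (Fin 2) R), MvPowerSeries.X 0] F = F
  assoc :
    psubst ![psubst ![(MvPowerSeries.X 0 : MvPowerSeries (Fin 3) R), MvPowerSeries.X 1] F,
        MvPowerSeries.X 2] F =
      psubst ![(MvPowerSeries.X 0 : MvPowerSeries (Fin 3) R),
        psubst ![MvPowerSeries.X 1, MvPowerSeries.X 2] F] F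

/-- `F` maps to `F'` under the ring homomorphism `φ` applied coefficientwise,
with moreover `φ` unique with this property. -/
def IsUniqueClassifyingHom {L : Type} [CommRing L] (FL : FormalGroupLaw L)
    (R : Type*) [CommRing R] (F : FormalGroupLaw R) : Prop :=
  ∃! φ : L →+* R, MvPowerSeries.map (σ := Fin 2) φ FL.F = F.F

section LazardAux

variable {σ τ : Type*} [Fintype σ] [DecidableEq σ] {R S : Type*} [CommRing R] [CommRing S]

lemma psubst_map (φ : R →+* S) (f : σ → MvPowerSeries τ R) (G : MvPowerSeries σ R) :
    MvPowerSeries.map (σ := τ) φ (psubst f G) =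
      psubst (fun i => MvPowerSeries.map (σ := τ) φ (f i)) (MvPowerSeries.map (σ := σ) φ G) := by
  ext e
  set D := Finset.Iic (Finsupp.equivFunOnFinite.symm fun _ : σ => e.sum fun _ n => n) with hD
  have hT : MvPolynomial.map φ (D.sum fun m => MvPolynomial.monomial m (MvPowerSeries.coeff (R := R) m G))
      = D.sum fun m => MvPolynomial.monomial m (MvPowerSeries.coeff (R := S) m (MvPowerSeries.map (σ := σ) φ G)) := by
    rw [map_sum]
    refine Finset.sum_congr rfl fun m _ => ?_
    rw [MvPolynomial.map_monomial, MvPowerSeries.coeff_map]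
  have key : (MvPowerSeries.map (σ := τ) φ)
        (MvPolynomial.eval₂ (MvPowerSeries.C (σ := τ) (R := R)) f
          (D.sum fun m => MvPolynomial.monomial m (MvPowerSeries.coeff (R := R) m G)))
      = MvPolynomial.eval₂ (MvPowerSeries.C (σ := τ) (R := S)) (fun i => MvPowerSeries.map (σ := τ) φ (f i))
          (D.sum fun m => MvPolynomial.monomial m (MvPowerSeries.coeff (R := S) m (MvPowerSeries.map (σ := σ) φ G))) := by
    rw [MvPolynomial.eval₂_comp_left (MvPowerSeries.map (σ := τ) φ) (MvPowerSeries.C (σ := τ) (R := R)) f,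
      show (MvPowerSeries.map (σ := τ) φ).comp (MvPowerSeries.C (σ := τ) (R := R)) = (MvPowerSeries.C (σ := τ) (R := S)).comp φ from
        RingHom.ext fun a => MvPowerSeries.map_C (f := φ) a, ← hT, ← MvPolynomial.eval₂_map]
    rfl
  calc MvPowerSeries.coeff (R := S) e (MvPowerSeries.map (σ := τ) φ (psubst f G))
      = φ (MvPowerSeries.coeff (R := R) e (MvPolynomial.eval₂ (MvPowerSeries.C (σ := τ) (R := R)) f
          (D.sum fun m => MvPolynomial.monomial m (MvPowerSeries.coeff (R := R) m G)))) :=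
        MvPowerSeries.coeff_map ..
    _ = MvPowerSeries.coeff (R := S) e ((MvPowerSeries.map (σ := τ) φ)
          (MvPolynomial.eval₂ (MvPowerSeries.C (σ := τ) (R := R)) f
            (D.sum fun m => MvPolynomial.monomial m (MvPowerSeries.coeff (R := R) m G)))) :=
        (MvPowerSeries.coeff_map ..).symm
    _ = _ := by rw [key]; rfl

lemma map_psubst_pair (φ : R →+* S) (a b : MvPowerSeries τ R) (G : MvPowerSeries (Fin 2) R) :
    MvPowerSeries.map (σ := τ) φ (psubst ![a, b] G) =
      psubst ![MvPowerSeries.map (σ := τ) φ a, MvPowerSeries.map (σ := τ) φ b]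
        (MvPowerSeries.map (σ := Fin 2) φ G) := by
  rw [psubst_map, show (fun i => MvPowerSeries.map (σ := τ) φ (![a, b] i)) =
    ![MvPowerSeries.map (σ := τ) φ a, MvPowerSeries.map (σ := τ) φ b] from funext fun i => by fin_cases i <;> rfl]

/-- The ring of polynomials on indeterminates indexed by exponents of 2-variable monomials. -/
abbrev LazardPre : Type := MvPolynomial (Fin 2 →₀ ℕ) ℤ

/-- The generic power series `Σ a_e u^e`. -/
noncomputable def genF : MvPowerSeries (Fin 2) LazardPre := fun e => MvPolynomial.X e

noncomputable def lrel1 : PowerSeries LazardPre :=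
  psubst ![(PowerSeries.X : PowerSeries LazardPre), 0] genF - PowerSeries.X

noncomputable def lrel2 : PowerSeries LazardPre :=
  psubst ![(0 : PowerSeries LazardPre), PowerSeries.X] genF - PowerSeries.X

noncomputable def lrel3 : MvPowerSeries (Fin 2) LazardPre :=
  psubst ![(MvPowerSeries.X 1 : MvPowerSeries (Fin 2) LazardPre), MvPowerSeries.X 0] genF - genF

noncomputable def lrel4 : MvPowerSeries (Fin 3) LazardPre :=
  psubst ![psubst ![(MvPowerSeries.X 0 : MvPowerSeries (Fin 3) LazardPre),
      MvPowerSeries.X 1] genF, MvPowerSeries.X 2] genF -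
    psubst ![(MvPowerSeries.X 0 : MvPowerSeries (Fin 3) LazardPre),
      psubst ![MvPowerSeries.X 1, MvPowerSeries.X 2] genF] genF

noncomputable def lazardGens : Set LazardPre :=
  (Set.range fun e => MvPowerSeries.coeff (R := LazardPre) e lrel1) ∪
  (Set.range fun e => MvPowerSeries.coeff (R := LazardPre) e lrel2) ∪
  (Set.range fun e => MvPowerSeries.coeff (R := LazardPre) e lrel3) ∪
  (Set.range fun e => MvPowerSeries.coeff (R := LazardPre) e lrel4)

noncomputable def lazardIdeal : Ideal LazardPre := Ideal.span lazardGens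

end LazardAux

section LazardConstruction

local notation "L" => LazardPre ⧸ lazardIdeal

noncomputable def lmk : LazardPre →+* LazardPre ⧸ lazardIdeal := Ideal.Quotient.mk lazardIdeal

lemma mem_lrel1 (e : Unit →₀ ℕ) : MvPowerSeries.coeff (R := LazardPre) e lrel1 ∈ lazardIdeal :=
  Ideal.subset_span (Or.inl (Or.inl (Or.inl ⟨e, rfl⟩)))

lemma mem_lrel2 (e : Unit →₀ ℕ) : MvPowerSeries.coeff (R := LazardPre) e lrel2 ∈ lazardIdeal :=
  Ideal.subset_span (Or.inl (Or.inl (Or.inr ⟨e, rfl⟩)))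

lemma mem_lrel3 (e : Fin 2 →₀ ℕ) : MvPowerSeries.coeff (R := LazardPre) e lrel3 ∈ lazardIdeal :=
  Ideal.subset_span (Or.inl (Or.inr ⟨e, rfl⟩))

lemma mem_lrel4 (e : Fin 3 →₀ ℕ) : MvPowerSeries.coeff (R := LazardPre) e lrel4 ∈ lazardIdeal :=
  Ideal.subset_span (Or.inr ⟨e, rfl⟩)

lemma map_lmk_eq {σ' : Type*} (A B : MvPowerSeries σ' LazardPre)
    (h : ∀ e, MvPowerSeries.coeff (R := LazardPre) e (A - B) ∈ lazardIdeal) :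
    MvPowerSeries.map (σ := σ') lmk A = MvPowerSeries.map (σ := σ') lmk B := by
  ext e
  rw [MvPowerSeries.coeff_map, MvPowerSeries.coeff_map]
  exact Ideal.Quotient.eq.mpr (by simpa using h e)

/-- The universal formal group law over the Lazard ring. -/
noncomputable def lazardFGL : FormalGroupLaw (LazardPre ⧸ lazardIdeal) where
  F := MvPowerSeries.map (σ := Fin 2) lmk genF
  zero_right := by
    have h := map_psubst_pair lmk (PowerSeries.X : PowerSeries LazardPre) 0 genF
    rw [map_zero, show MvPowerSeries.map (σ := Unit) lmk (PowerSeries.X : PowerSeries LazardPre)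
      = PowerSeries.X from PowerSeries.map_X lmk] at h
    rw [← h, map_lmk_eq _ PowerSeries.X (fun e => mem_lrel1 e)]
    exact PowerSeries.map_X lmk
  zero_left := by
    have h := map_psubst_pair lmk (0 : PowerSeries LazardPre) PowerSeries.X genF
    rw [map_zero, show MvPowerSeries.map (σ := Unit) lmk (PowerSeries.X : PowerSeries LazardPre)
      = PowerSeries.X from PowerSeries.map_X lmk] at h
    rw [← h, map_lmk_eq _ PowerSeries.X (fun e => mem_lrel2 e)]
    exact PowerSeries.map_X lmk
  comm := by
    have h := map_psubst_pair lmk (MvPowerSeries.X 1 : MvPowerSeries (Fin 2) LazardPre)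
      (MvPowerSeries.X 0) genF
    rw [MvPowerSeries.map_X, MvPowerSeries.map_X] at h
    rw [← h]
    exact map_lmk_eq _ genF (fun e => mem_lrel3 e)
  assoc := by
    have hin1 : MvPowerSeries.map (σ := Fin 3) lmk
        (psubst ![(MvPowerSeries.X 0 : MvPowerSeries (Fin 3) LazardPre), MvPowerSeries.X 1] genF)
        = psubst ![(MvPowerSeries.X 0 : MvPowerSeries (Fin 3) L), MvPowerSeries.X 1]
            (MvPowerSeries.map (σ := Fin 2) lmk genF) := by
      rw [map_psubst_pair, MvPowerSeries.map_X, MvPowerSeries.map_X]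
    have hin2 : MvPowerSeries.map (σ := Fin 3) lmk
        (psubst ![(MvPowerSeries.X 1 : MvPowerSeries (Fin 3) LazardPre), MvPowerSeries.X 2] genF)
        = psubst ![(MvPowerSeries.X 1 : MvPowerSeries (Fin 3) L), MvPowerSeries.X 2]
            (MvPowerSeries.map (σ := Fin 2) lmk genF) := by
      rw [map_psubst_pair, MvPowerSeries.map_X, MvPowerSeries.map_X]
    have h1 := map_psubst_pair lmk
      (psubst ![(MvPowerSeries.X 0 : MvPowerSeries (Fin 3) LazardPre), MvPowerSeries.X 1] genF)
      (MvPowerSeries.X 2) genF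
    have h2 := map_psubst_pair lmk
      (MvPowerSeries.X 0 : MvPowerSeries (Fin 3) LazardPre)
      (psubst ![(MvPowerSeries.X 1 : MvPowerSeries (Fin 3) LazardPre), MvPowerSeries.X 2] genF) genF
    rw [MvPowerSeries.map_X, hin1] at h1
    rw [MvPowerSeries.map_X, hin2] at h2
    rw [← h1, ← h2]
    exact map_lmk_eq _ _ (fun e => mem_lrel4 e)

end LazardConstruction

/-- Existence of the Lazard ring: there is a commutative ring `L` with a formal
group law `FL` such that for every commutative ring `R` and formal group law `F`
over `R` there is a unique ring homomorphism `L → R` carrying `FL` to `F`. -/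
theorem exists_universal_formal_group_law :
    ∃ (L : Type) (instL : CommRing L) (FL : @FormalGroupLaw L instL),
      ∀ (R : Type*) (instR : CommRing R) (F : @FormalGroupLaw R instR),
        @IsUniqueClassifyingHom L instL FL R instR F := by
  refine ⟨LazardPre ⧸ lazardIdeal, inferInstance, lazardFGL, ?_⟩
  intro R instR F
  set ψ : LazardPre →+* R :=
    MvPolynomial.eval₂Hom (Int.castRingHom R) fun e => MvPowerSeries.coeff (R := R) e F.F with hψ
  have hGen : MvPowerSeries.map (σ := Fin 2) ψ genF = F.F := by
    ext e
    rw [MvPowerSeries.coeff_map]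
    exact MvPolynomial.eval₂Hom_X' _ _ _
  have h1 : MvPowerSeries.map (σ := Unit) ψ lrel1 = 0 := by
    unfold lrel1
    rw [map_sub, map_psubst_pair, hGen, map_zero,
      show MvPowerSeries.map (σ := Unit) ψ (PowerSeries.X : PowerSeries LazardPre) = PowerSeries.X from
        PowerSeries.map_X ψ, F.zero_right, sub_self]
  have h2 : MvPowerSeries.map (σ := Unit) ψ lrel2 = 0 := by
    unfold lrel2
    rw [map_sub, map_psubst_pair, hGen, map_zero,
      show MvPowerSeries.map (σ := Unit) ψ (PowerSeries.X : PowerSeries LazardPre) = PowerSeries.X from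
        PowerSeries.map_X ψ, F.zero_left, sub_self]
  have h3 : MvPowerSeries.map (σ := Fin 2) ψ lrel3 = 0 := by
    unfold lrel3
    rw [map_sub, map_psubst_pair, hGen, MvPowerSeries.map_X, MvPowerSeries.map_X, F.comm,
      sub_self]
  have h4 : MvPowerSeries.map (σ := Fin 3) ψ lrel4 = 0 := by
    unfold lrel4
    simp only [map_sub, map_psubst_pair, MvPowerSeries.map_X, hGen]
    rw [F.assoc, sub_self]
  have hker : lazardIdeal ≤ RingHom.ker ψ := by
    rw [lazardIdeal, Ideal.span_le]
    rintro x (((⟨e, rfl⟩ | ⟨e, rfl⟩) | ⟨e, rfl⟩) | ⟨e, rfl⟩) <;>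
      simp only [SetLike.mem_coe, RingHom.mem_ker]
    · rw [← MvPowerSeries.coeff_map (f := ψ), h1, map_zero]
    · rw [← MvPowerSeries.coeff_map (f := ψ), h2, map_zero]
    · rw [← MvPowerSeries.coeff_map (f := ψ), h3, map_zero]
    · rw [← MvPowerSeries.coeff_map (f := ψ), h4, map_zero]
  refine ⟨Ideal.Quotient.lift lazardIdeal ψ fun a ha => RingHom.mem_ker.mp (hker ha), ?_, ?_⟩
  · ext e
    rw [MvPowerSeries.coeff_map]
    show Ideal.Quotient.lift lazardIdeal ψ (fun a ha => RingHom.mem_ker.mp (hker ha)) (lmk (MvPolynomial.X e)) = _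
    rw [show (lmk (MvPolynomial.X e) : LazardPre ⧸ lazardIdeal)
      = Ideal.Quotient.mk lazardIdeal (MvPolynomial.X e) from rfl, Ideal.Quotient.lift_mk]
    exact MvPolynomial.eval₂Hom_X' _ _ _
  · intro φ' hφ'
    refine Ideal.Quotient.ringHom_ext (MvPolynomial.ringHom_ext (fun a => ?_) (fun e => ?_))
    · exact RingHom.congr_fun (Subsingleton.elim
        ((φ'.comp (Ideal.Quotient.mk lazardIdeal)).comp (MvPolynomial.C : ℤ →+* LazardPre))
        (((Ideal.Quotient.lift lazardIdeal ψ fun a ha => RingHom.mem_ker.mp (hker ha)).comp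
          (Ideal.Quotient.mk lazardIdeal)).comp MvPolynomial.C)) a
    · have h := congrArg (MvPowerSeries.coeff (R := R) e) hφ'
      rw [MvPowerSeries.coeff_map] at h
      show φ' (Ideal.Quotient.mk lazardIdeal (MvPolynomial.X e))
        = Ideal.Quotient.lift lazardIdeal ψ (fun a ha => RingHom.mem_ker.mp (hker ha)) (Ideal.Quotient.mk lazardIdeal (MvPolynomial.X e))
      rw [Ideal.Quotient.lift_mk]
      exact h.trans (MvPolynomial.eval₂Hom_X' (Int.castRingHom R) (fun e => MvPowerSeries.coeff (R := R) e F.F) e).symm
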